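/- Let (X_t : t ∈ ℤ) be a weakly stationary mean-zero H-valued process with C_h = 0 for all h ≠ 0. Then the spectral density operator satisfies F_θ = C_0/(2π) for all θ, the dynamic eigenfunctions can be chosen constant in θ, φ_m(θ) ≡ v_m where v_m is the m-th eigenfunction of the covariance operator C_0; for this choice the filter coefficients satisfy φ_{m0} = v_m and φ_{mℓ} = 0 for ℓ ≠ 0, and the m-th dynamic FPC score equals the m-th static FPC score: Y_{mt} = ⟨X_t, v_m⟩. -/

import Mathlib

open MeasureTheory Filter Topology Complex
open scoped ENNReal NNReal

noncomputable section

local notation "⟪" x ", " y "⟫" => @inner ℂ _ _ x y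

/-- The rank-one operator `(x ⊗ y)(z) = ⟨z, y⟩·x` (inner product linear in its
first argument, as in the paper), i.e. `z ↦ ⟪y, z⟫ • x` in Mathlib's convention. -/
def rankOne {H H' : Type*} [NormedAddCommGroup H] [InnerProductSpace ℂ H]
    [NormedAddCommGroup H'] [NormedSpace ℂ H'] (x : H') (y : H) : H →L[ℂ] H' :=
  (innerSL ℂ y).smulRight x

/-- Hilbert–Schmidt norm of an operator, computed w.r.t. a Hilbert basis. -/
def hsNorm {H H' : Type*} [NormedAddCommGroup H] [InnerProductSpace ℂ H]
    [NormedAddCommGroup H'] [NormedSpace ℂ H'] {ι : Type*} (b : HilbertBasis ι ℂ H)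
    (T : H →L[ℂ] H') : ℝ :=
  Real.sqrt (∑' i, ‖T (b i)‖ ^ 2)

/-- Trace (with values in ℝ≥0∞) of a non-negative self-adjoint operator,
computed w.r.t. a Hilbert basis. -/
def traceENN {H : Type*} [NormedAddCommGroup H] [InnerProductSpace ℂ H]
    {ι : Type*} (b : HilbertBasis ι ℂ H) (T : H →L[ℂ] H) : ℝ≥0∞ :=
  ∑' i, ENNReal.ofReal (⟪b i, T (b i)⟫).re

/-- Proposition 2(b): if C_h = 0 for h ≠ 0, then F_θ = C₀/(2π), the dynamic
eigenfunctions can be chosen constant equal to the static FPCs v_m, the filter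
coefficients are φ_{m0} = v_m and φ_{mℓ} = 0 for ℓ ≠ 0, and the dynamic scores
coincide with the static scores ⟨X_t, v_m⟩. -/
theorem stmt_2
    {H : Type*} [NormedAddCommGroup H] [InnerProductSpace ℂ H] [CompleteSpace H]
    {ι : Type*} [Countable ι] (b : HilbertBasis ι ℂ H)
    {Ω : Type*} [MeasurableSpace Ω] {P : Measure Ω} [IsProbabilityMeasure P]
    (X : ℤ → Ω → H)
    (hXmeas : ∀ t, AEStronglyMeasurable (X t) P)
    (hXL2 : ∀ t, MemLp (X t) 2 P)
    (hXmean : ∀ t, ∫ ω, X t ω ∂P = 0)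
    (C : ℤ → H →L[ℂ] H)
    (hCstat : ∀ t h : ℤ, ∫ ω, rankOne (X (t + h) ω) (X t ω) ∂P = C h)
    (hCzero : ∀ h : ℤ, h ≠ 0 → C h = 0)
    (F : ℝ → H →L[ℂ] H)
    (hF : ∀ θ : ℝ, HasSum
      (fun h : ℤ => (1 / (2 * (Real.pi : ℂ))) • (Complex.exp (-Complex.I * h * θ) • C h)) (F θ))
    (v : ℕ → H) (μ : ℕ → ℝ)
    (hμ_nonneg : ∀ m, 0 ≤ μ m)
    (hμ_mono : Antitone μ)
    (hv_norm : ∀ m, ‖v m‖ = 1)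
    (hv_eig : ∀ m, C 0 (v m) = (μ m : ℂ) • v m)
    (hv_ON : Orthonormal ℂ v)
    (hv_exp : ∀ x : H, HasSum (fun m => ((μ m : ℂ) * ⟪v m, x⟫) • v m) (C 0 x)) :
    (∀ θ : ℝ, F θ = (1 / (2 * (Real.pi : ℂ))) • C 0) ∧
    (∀ (θ : ℝ) (m : ℕ), F θ (v m) = ((1 / (2 * Real.pi) * μ m : ℝ) : ℂ) • v m) ∧
    (∀ (m : ℕ) (ℓ : ℤ),
      ((1 / (2 * Real.pi)) • ∫ s in (-Real.pi)..Real.pi, Complex.exp (-Complex.I * ℓ * s) • v m)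
        = if ℓ = 0 then v m else 0) ∧
    (∀ (m : ℕ) (t : ℤ) (ω : Ω),
      HasSum (fun ℓ : ℤ => ⟪(if ℓ = 0 then v m else (0 : H)), X (t - ℓ) ω⟫) ⟪v m, X t ω⟫) := by
  have hFeq : ∀ θ : ℝ, F θ = (1 / (2 * (Real.pi : ℂ))) • C 0 := by
    intro θ
    have hs : HasSum
        (fun h : ℤ => (1 / (2 * (Real.pi : ℂ))) • (Complex.exp (-Complex.I * h * θ) • C h))
        ((1 / (2 * (Real.pi : ℂ))) • (Complex.exp (-Complex.I * (0 : ℤ) * θ) • C 0)) := by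
      refine hasSum_single 0 ?_
      intro h hh
      simp [hCzero h hh]
    have := (hF θ).unique hs
    simpa using this
  refine ⟨hFeq, ?_, ?_, ?_⟩
  · intro θ m
    rw [hFeq θ]
    have : ((1 / (2 * Real.pi) * μ m : ℝ) : ℂ) = (1 / (2 * (Real.pi : ℂ))) * (μ m : ℂ) := by
      push_cast; ring
    rw [ContinuousLinearMap.smul_apply, hv_eig m, smul_smul, this]
  · intro m ℓ
    by_cases hℓ : ℓ = 0
    · subst hℓ
      simp only [if_true]
      have : ∀ s : ℝ, Complex.exp (-Complex.I * ((0 : ℤ) : ℂ) * (s : ℂ)) • v m = v m := by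
        intro s; simp
      rw [intervalIntegral.integral_congr (fun s _ => this s)]
      rw [intervalIntegral.integral_const]
      rw [smul_smul]
      have hπ : (Real.pi : ℝ) ≠ 0 := Real.pi_ne_zero
      have : (1 / (2 * Real.pi)) * (Real.pi - -Real.pi) = 1 := by
        field_simp; ring
      rw [this, one_smul]
    · simp only [if_neg hℓ]
      have hc : (-Complex.I * (ℓ : ℂ)) ≠ 0 := by
        simp [Complex.I_ne_zero, Complex.ext_iff]
        exact_mod_cast hℓ
      have h1 : (∫ s in (-Real.pi)..Real.pi, Complex.exp (-Complex.I * ℓ * s) • v m)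
          = (∫ s in (-Real.pi)..Real.pi, Complex.exp ((-Complex.I * ℓ) * s)) • v m := by
        rw [← intervalIntegral.integral_smul_const]
      rw [h1, integral_exp_mul_complex hc]
      have hexp : Complex.exp ((-Complex.I * ℓ) * (Real.pi : ℂ))
          = Complex.exp ((-Complex.I * ℓ) * ((-Real.pi : ℝ) : ℂ)) := by
        rw [Complex.exp_eq_exp_iff_exists_int]
        refine ⟨-ℓ, ?_⟩
        push_cast
        ring
      rw [hexp, sub_self, zero_div, zero_smul, smul_zero]
  · intro m t ω
    have hs : HasSum (fun ℓ : ℤ => ⟪(if ℓ = 0 then v m else (0 : H)), X (t - ℓ) ω⟫)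
        ⟪(if (0:ℤ) = 0 then v m else (0 : H)), X (t - 0) ω⟫ := by
      refine hasSum_single 0 ?_
      intro ℓ hℓ
      simp [if_neg hℓ]
    simpa using hs
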